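/- For every σ ∈ (0,1), the function ρ(t) = ln(t^σ + 1) − σ·ln(t + 1) is strictly decreasing on [1, ∞), satisfies ρ(t) > 0 for all t ≥ 1, and ρ(t) → 0 as t → +∞. -/

import Mathlib

open Filter Real

private lemma rho_deriv (σ : ℝ) (hσ0 : 0 < σ) (x : ℝ) (hx : 1 < x) :
    HasDerivAt (fun t : ℝ => Real.log (t ^ σ + 1) - σ * Real.log (t + 1))
      (σ * x ^ (σ - 1) / (x ^ σ + 1) - σ * (1 / (x + 1))) x := by
  have hx0 : (0:ℝ) < x := by linarith
  have hpos : 0 < x ^ σ + 1 := by positivity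
  have h1 : HasDerivAt (fun t : ℝ => t ^ σ + 1) (σ * x ^ (σ - 1)) x :=
    (Real.hasDerivAt_rpow_const (Or.inl hx0.ne')).add_const 1
  have h2 : HasDerivAt (fun t : ℝ => Real.log (t ^ σ + 1))
      (σ * x ^ (σ - 1) / (x ^ σ + 1)) x := h1.log hpos.ne'
  have h3 : HasDerivAt (fun t : ℝ => Real.log (t + 1)) (1 / (x + 1)) x := by
    have := ((hasDerivAt_id x).add_const 1).log (by linarith : x + 1 ≠ 0)
    simpa using this
  exact h2.sub (h3.const_mul σ)

private lemma rho_anti (σ : ℝ) (hσ0 : 0 < σ) (hσ1 : σ < 1) :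
    StrictAntiOn (fun t : ℝ => Real.log (t ^ σ + 1) - σ * Real.log (t + 1)) (Set.Ici 1) := by
  have hcont : ContinuousOn
      (fun t : ℝ => Real.log (t ^ σ + 1) - σ * Real.log (t + 1)) (Set.Ici 1) := by
    have h1 : ContinuousOn (fun t : ℝ => t ^ σ + 1) (Set.Ici 1) :=
      (continuousOn_id.rpow_const (fun x hx => Or.inl (by
        have : (1:ℝ) ≤ x := hx; simp only [id]; positivity))).add continuousOn_const
    have h2 : ContinuousOn (fun t : ℝ => Real.log (t ^ σ + 1)) (Set.Ici 1) :=
      h1.log (fun x hx => by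
        have : (1:ℝ) ≤ x := hx
        have : (0:ℝ) < x ^ σ + 1 := by positivity
        exact this.ne')
    have h3 : ContinuousOn (fun t : ℝ => σ * Real.log (t + 1)) (Set.Ici 1) :=
      ((continuousOn_id.add continuousOn_const).log (fun x hx => by
        have : (1:ℝ) ≤ x := hx; intro h; simp only [Pi.add_apply, id] at h; linarith)).const_smul σ
    exact h2.sub h3
  apply strictAntiOn_of_deriv_neg (convex_Ici 1) hcont
  intro x hx
  rw [interior_Ici] at hx
  have hx1 : (1:ℝ) < x := hx
  have hx0 : (0:ℝ) < x := by linarith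
  rw [(rho_deriv σ hσ0 x hx1).deriv]
  have hpos : 0 < x ^ σ + 1 := by positivity
  have key : x ^ (σ - 1) * (x + 1) < x ^ σ + 1 := by
    have hlt : x ^ (σ - 1) < 1 :=
      Real.rpow_lt_one_of_one_lt_of_neg hx1 (by linarith)
    have hmul : x ^ (σ - 1) * x ^ (1:ℝ) = x ^ σ := by
      rw [← Real.rpow_add hx0]; norm_num
    have e1 : x ^ (σ - 1) * (x + 1) = x ^ (σ - 1) * x ^ (1:ℝ) + x ^ (σ - 1) := by
      rw [Real.rpow_one]; ring
    rw [e1, hmul]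
    linarith
  have : σ * x ^ (σ - 1) / (x ^ σ + 1) < σ * (1 / (x + 1)) := by
    rw [mul_one_div, div_lt_div_iff₀ hpos (by linarith : (0:ℝ) < x + 1)]
    have : σ * (x ^ (σ - 1) * (x + 1)) < σ * (x ^ σ + 1) :=
      (mul_lt_mul_iff_right₀ hσ0).mpr key
    nlinarith
  linarith

private lemma rho_tendsto (σ : ℝ) (hσ0 : 0 < σ) :
    Filter.Tendsto (fun t : ℝ => Real.log (t ^ σ + 1) - σ * Real.log (t + 1))
      Filter.atTop (nhds 0) := by
  -- inner function g t = (t/(t+1))^σ + ((t+1)^σ)⁻¹ tends to 1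
  have hA : Tendsto (fun t : ℝ => t / (t + 1)) atTop (nhds 1) := by
    have h0 : Tendsto (fun t : ℝ => (t + 1)⁻¹) atTop (nhds 0) :=
      tendsto_inv_atTop_zero.comp (tendsto_atTop_add_const_right _ 1 tendsto_id)
    have h1 : Tendsto (fun t : ℝ => 1 - (t + 1)⁻¹) atTop (nhds 1) := by
      simpa using (tendsto_const_nhds.sub h0)
    refine h1.congr' ?_
    filter_upwards [eventually_gt_atTop (0:ℝ)] with t ht
    field_simp
    ring
  have hApow : Tendsto (fun t : ℝ => (t / (t + 1)) ^ σ) atTop (nhds 1) := by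
    have hc : ContinuousAt (fun x : ℝ => x ^ σ) 1 :=
      Real.continuousAt_rpow_const 1 σ (Or.inl one_ne_zero)
    have := hc.tendsto.comp hA
    simpa [Function.comp_def] using this
  have hB : Tendsto (fun t : ℝ => ((t + 1) ^ σ)⁻¹) atTop (nhds 0) := by
    apply tendsto_inv_atTop_zero.comp
    exact (tendsto_rpow_atTop hσ0).comp (tendsto_atTop_add_const_right _ 1 tendsto_id)
  have hg : Tendsto (fun t : ℝ => (t / (t + 1)) ^ σ + ((t + 1) ^ σ)⁻¹) atTop (nhds 1) := by
    simpa using hApow.add hB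
  have hlog : Tendsto (fun t : ℝ => Real.log ((t / (t + 1)) ^ σ + ((t + 1) ^ σ)⁻¹))
      atTop (nhds 0) := by
    have hc : ContinuousAt Real.log 1 := Real.continuousAt_log one_ne_zero
    have := hc.tendsto.comp hg
    simpa [Function.comp_def] using this
  refine hlog.congr' ?_
  filter_upwards [eventually_ge_atTop (1:ℝ)] with t ht
  have ht0 : (0:ℝ) < t := by linarith
  have ht1 : (0:ℝ) < t + 1 := by linarith
  have htp : (0:ℝ) < (t + 1) ^ σ := Real.rpow_pos_of_pos ht1 σ
  have hdiv : (t / (t + 1)) ^ σ = t ^ σ / (t + 1) ^ σ :=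
    Real.div_rpow ht0.le ht1.le σ
  have hsum : (t / (t + 1)) ^ σ + ((t + 1) ^ σ)⁻¹ = (t ^ σ + 1) / (t + 1) ^ σ := by
    rw [hdiv]; field_simp
  rw [hsum, Real.log_div (by positivity) htp.ne', Real.log_rpow ht1]

theorem stmt_12 (σ : ℝ) (hσ0 : 0 < σ) (hσ1 : σ < 1) :
    StrictAntiOn (fun t : ℝ => Real.log (t ^ σ + 1) - σ * Real.log (t + 1)) (Set.Ici 1) ∧
    (∀ t : ℝ, 1 ≤ t → 0 < Real.log (t ^ σ + 1) - σ * Real.log (t + 1)) ∧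
    Filter.Tendsto (fun t : ℝ => Real.log (t ^ σ + 1) - σ * Real.log (t + 1))
      Filter.atTop (nhds 0) := by
  have hanti := rho_anti σ hσ0 hσ1
  have hlim := rho_tendsto σ hσ0
  refine ⟨hanti, ?_, hlim⟩
  intro t ht
  set ρ := fun t : ℝ => Real.log (t ^ σ + 1) - σ * Real.log (t + 1)
  have hnonneg : 0 ≤ ρ (t + 1) := by
    refine le_of_tendsto hlim ?_
    filter_upwards [eventually_ge_atTop (t + 1)] with u hu
    rcases eq_or_lt_of_le hu with h | h
    · exact le_of_eq (congrArg ρ h.symm)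
    · exact (hanti (by simp; linarith) (by simp; linarith) h).le
  have : ρ (t + 1) < ρ t := hanti (by simpa using ht) (by simp; linarith) (by linarith)
  have : 0 < ρ t := lt_of_le_of_lt hnonneg this
  exact this
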